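/- In the free group F on {a, b, c}, the subgroups H = ⟨c, a⁻¹ba⟩ and K = ⟨a, b⁻¹cb⟩ satisfy: H and K are each free of rank 2, H ∩ K = 1, and the subgroup generated by H and K is all of F (which has rank 3). -/

import Mathlib

namespace Stmt7Aux

open FreeGroup

local notation "F" => FreeGroup (Fin 3)
local notation "F2" => FreeGroup (Fin 2)

def fH : Fin 2 → F := ![of 2, (of 0)⁻¹ * of 1 * of 0]
def fK : Fin 2 → F := ![of 0, (of 1)⁻¹ * of 2 * of 1]
def rH : F →* F2 := FreeGroup.lift ![1, of 1, of 0]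
def rK : F →* F2 := FreeGroup.lift ![of 0, 1, of 1]

lemma range_pair {α : Type*} (x y : α) : Set.range ![x, y] = {x, y} := by
  ext u
  constructor
  · rintro ⟨i, rfl⟩
    fin_cases i
    · exact Set.mem_insert _ _
    · exact Set.mem_insert_of_mem _ rfl
  · rintro (rfl | rfl)
    · exact ⟨0, rfl⟩
    · exact ⟨1, rfl⟩

lemma rH_comp : rH.comp (FreeGroup.lift fH) = MonoidHom.id F2 :=
  FreeGroup.ext_hom _ _ (by
    intro i
    fin_cases i <;> simp [fH, rH])

lemma rK_comp : rK.comp (FreeGroup.lift fK) = MonoidHom.id F2 :=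
  FreeGroup.ext_hom _ _ (by
    intro i
    fin_cases i <;> simp [fK, rK])

lemma liftfH_inj : Function.Injective (FreeGroup.lift fH) := by
  have h : Function.LeftInverse rH (FreeGroup.lift fH) := fun w => by
    simpa using DFunLike.congr_fun rH_comp w
  exact h.injective

lemma liftfK_inj : Function.Injective (FreeGroup.lift fK) := by
  have h : Function.LeftInverse rK (FreeGroup.lift fK) := fun w => by
    simpa using DFunLike.congr_fun rK_comp w
  exact h.injective

lemma H_eq : Subgroup.closure {(of 2 : F), (of 0)⁻¹ * of 1 * of 0} =
    (FreeGroup.lift fH).range := by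
  rw [FreeGroup.range_lift_eq_closure, fH, range_pair]

lemma K_eq : Subgroup.closure {(of 0 : F), (of 1)⁻¹ * of 2 * of 1} =
    (FreeGroup.lift fK).range := by
  rw [FreeGroup.range_lift_eq_closure, fK, range_pair]

lemma rK_comp_fH : rK.comp (FreeGroup.lift fH) = FreeGroup.lift ![of 1, 1] :=
  FreeGroup.ext_hom _ _ (by
    intro i
    fin_cases i <;> simp [fH, rK])

lemma rH_comp_fK : rH.comp (FreeGroup.lift fK) =
    FreeGroup.lift ![1, (of 1)⁻¹ * of 0 * of 1] :=
  FreeGroup.ext_hom _ _ (by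
    intro i
    fin_cases i <;> simp [fK, rH])

/-- the matrix L = [[1,0],[1,1]] as element of SL(2,ℤ) -/
def Lm : Matrix.SpecialLinearGroup (Fin 2) ℤ :=
  ⟨!![1, 0; 1, 1], by norm_num [Matrix.det_fin_two_of]⟩

/-- the matrix P = L⁻¹ T L = [[2,1],[-1,0]] -/
def Pm : Matrix.SpecialLinearGroup (Fin 2) ℤ :=
  ⟨!![2, 1; -1, 0], by norm_num [Matrix.det_fin_two_of]⟩

/-- the test homomorphism : a ↦ L, b ↦ T, c ↦ T -/
def φ : F →* Matrix.SpecialLinearGroup (Fin 2) ℤ :=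
  FreeGroup.lift ![Lm, ModularGroup.T, ModularGroup.T]

lemma φ_a : φ (of 0) = Lm := by simp [φ]
lemma φ_b : φ (of 1) = ModularGroup.T := by simp [φ]
lemma φ_c : φ (of 2) = ModularGroup.T := by simp [φ]

lemma Lm_mul_Pm : Lm * Pm = ModularGroup.T * Lm := by
  apply Subtype.ext
  rw [Matrix.SpecialLinearGroup.coe_mul, Matrix.SpecialLinearGroup.coe_mul]
  simp only [Matrix.SpecialLinearGroup.coe_mul, Lm, Pm, ModularGroup.coe_T]
  norm_num [Matrix.mul_fin_two]

lemma φ_p : φ ((of 0)⁻¹ * of 1 * of 0) = Pm := by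
  rw [_root_.map_mul, _root_.map_mul, _root_.map_inv, φ_a, φ_b, mul_assoc,
    inv_mul_eq_iff_eq_mul, Lm_mul_Pm]

/-- the key computation : if T^n = Pm⁻¹ * T^m * Pm then n = 0 and m = 0 -/
lemma key (n m : ℤ) (h : ModularGroup.T ^ n = Pm⁻¹ * ModularGroup.T ^ m * Pm) :
    n = 0 ∧ m = 0 := by
  have h2 : Pm * ModularGroup.T ^ n = ModularGroup.T ^ m * Pm := by
    rw [h]; group
  have h3 := congrArg
    (fun M : Matrix.SpecialLinearGroup (Fin 2) ℤ => (M : Matrix (Fin 2) (Fin 2) ℤ)) h2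
  rw [Matrix.SpecialLinearGroup.coe_mul, Matrix.SpecialLinearGroup.coe_mul] at h3
  simp only [Matrix.SpecialLinearGroup.coe_mul, ModularGroup.coe_T_zpow, Pm] at h3
  have h00 := congrFun (congrFun h3 0) 0
  have h11 := congrFun (congrFun h3 1) 1
  simp [Matrix.mul_apply, Fin.sum_univ_two] at h00 h11
  omega

lemma inf_eq_bot :
    Subgroup.closure {(of 2 : F), (of 0)⁻¹ * of 1 * of 0} ⊓
      Subgroup.closure {(of 0 : F), (of 1)⁻¹ * of 2 * of 1} = ⊥ := by
  rw [H_eq, K_eq, Subgroup.eq_bot_iff_forall]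
  rintro g ⟨hgH, hgK⟩
  obtain ⟨w, hw⟩ := hgH
  obtain ⟨w', hw'⟩ := hgK
  have hrKg : rK g = w' := by
    rw [← hw']
    simpa using DFunLike.congr_fun rK_comp w'
  have hmem : rK g ∈ Subgroup.zpowers (of 1 : F2) := by
    rw [← hw]
    have heq : rK (FreeGroup.lift fH w) = FreeGroup.lift ![of 1, (1 : F2)] w :=
      DFunLike.congr_fun rK_comp_fH w
    rw [heq]
    have hr : (FreeGroup.lift ![of 1, (1 : F2)]).range ≤ Subgroup.zpowers (of 1 : F2) := by
      rw [FreeGroup.range_lift_eq_closure, range_pair, Subgroup.closure_le]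
      rintro x (rfl | rfl)
      · exact Subgroup.mem_zpowers _
      · exact one_mem _
    exact hr ⟨w, rfl⟩
  obtain ⟨n, hn⟩ := Subgroup.mem_zpowers_iff.mp hmem
  have hrHg : rH g = w := by
    rw [← hw]
    simpa using DFunLike.congr_fun rH_comp w
  have hmem' : rH g ∈ Subgroup.zpowers ((of 1)⁻¹ * of 0 * of 1 : F2) := by
    rw [← hw']
    have heq : rH (FreeGroup.lift fK w') = FreeGroup.lift ![1, (of 1)⁻¹ * of 0 * of 1] w' :=
      DFunLike.congr_fun rH_comp_fK w'
    rw [heq]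
    have hr : (FreeGroup.lift ![1, (of 1)⁻¹ * of 0 * of 1]).range ≤
        Subgroup.zpowers ((of 1)⁻¹ * of 0 * of 1 : F2) := by
      rw [FreeGroup.range_lift_eq_closure, range_pair, Subgroup.closure_le]
      rintro x (rfl | rfl)
      · exact one_mem _
      · exact Subgroup.mem_zpowers _
    exact hr ⟨w', rfl⟩
  obtain ⟨m, hm⟩ := Subgroup.mem_zpowers_iff.mp hmem'
  -- so g = (b⁻¹ c b)^n  and  g = (p⁻¹ c p)^m
  have hfK1 : FreeGroup.lift fK (of 1) = ((of 1)⁻¹ * of 2 * of 1 : F) := by simp [fK]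
  have hgK' : g = ((of 1)⁻¹ * of 2 * of 1 : F) ^ n := by
    rw [← hw', ← hrKg, ← hn, _root_.map_zpow, hfK1]
  have hfH1 : FreeGroup.lift fH ((of 1)⁻¹ * of 0 * of 1) =
      (((of 0)⁻¹ * of 1 * of 0)⁻¹ * of 2 * ((of 0)⁻¹ * of 1 * of 0) : F) := by
    simp only [_root_.map_mul, _root_.map_inv]
    have h0 : FreeGroup.lift fH (of 0) = (of 2 : F) := by simp [fH]
    have h1 : FreeGroup.lift fH (of 1) = ((of 0)⁻¹ * of 1 * of 0 : F) := by simp [fH]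
    rw [h0, h1]
  have hgH' : g = (((of 0)⁻¹ * of 1 * of 0)⁻¹ * of 2 * ((of 0)⁻¹ * of 1 * of 0) : F) ^ m := by
    rw [← hw, ← hrHg, ← hm, _root_.map_zpow, hfH1]
  -- apply φ
  have hφ : φ g = ModularGroup.T ^ n := by
    rw [hgK', _root_.map_zpow]
    congr 1
    rw [_root_.map_mul, _root_.map_mul, _root_.map_inv, φ_b, φ_c]
    group
  have hφ' : φ g = Pm⁻¹ * ModularGroup.T ^ m * Pm := by
    rw [hgH', _root_.map_zpow, _root_.map_mul, _root_.map_mul, _root_.map_inv, φ_c, φ_p]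
    simpa using conj_zpow (i := m) (a := Pm⁻¹) (b := ModularGroup.T)
  obtain ⟨hn0, -⟩ := key n m (hφ.symm.trans hφ')
  rw [hgK', hn0, zpow_zero]

lemma sup_eq_top :
    Subgroup.closure {(of 2 : F), (of 0)⁻¹ * of 1 * of 0} ⊔
      Subgroup.closure {(of 0 : F), (of 1)⁻¹ * of 2 * of 1} = ⊤ := by
  rw [eq_top_iff, ← FreeGroup.closure_range_of (Fin 3), Subgroup.closure_le]
  rintro x ⟨i, rfl⟩
  set H := Subgroup.closure {(of 2 : F), (of 0)⁻¹ * of 1 * of 0} with hH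
  set K := Subgroup.closure {(of 0 : F), (of 1)⁻¹ * of 2 * of 1} with hK
  have ha : (of 0 : F) ∈ H ⊔ K :=
    Subgroup.mem_sup_right (Subgroup.subset_closure (by simp))
  have hc : (of 2 : F) ∈ H ⊔ K :=
    Subgroup.mem_sup_left (Subgroup.subset_closure (by simp))
  have hq : ((of 0)⁻¹ * of 1 * of 0 : F) ∈ H ⊔ K :=
    Subgroup.mem_sup_left (Subgroup.subset_closure (by simp))
  have hb : (of 1 : F) ∈ H ⊔ K := by
    have hb1 : (of 1 : F) = of 0 * ((of 0)⁻¹ * of 1 * of 0) * (of 0)⁻¹ := by group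
    rw [hb1]
    exact mul_mem (mul_mem ha hq) (inv_mem ha)
  fin_cases i
  · exact ha
  · exact hb
  · exact hc

end Stmt7Aux

/-- In the free group on `{a, b, c}`, the subgroups `H = ⟨c, a⁻¹ba⟩` and
`K = ⟨a, b⁻¹cb⟩` are free of rank 2, intersect trivially, and generate the
whole free group (which has rank 3). -/
theorem stmt_7 :
    let a : FreeGroup (Fin 3) := FreeGroup.of 0
    let b : FreeGroup (Fin 3) := FreeGroup.of 1
    let c : FreeGroup (Fin 3) := FreeGroup.of 2
    let H : Subgroup (FreeGroup (Fin 3)) := Subgroup.closure {c, a⁻¹ * b * a}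
    let K : Subgroup (FreeGroup (Fin 3)) := Subgroup.closure {a, b⁻¹ * c * b}
    Nonempty (↥H ≃* FreeGroup (Fin 2)) ∧ Nonempty (↥K ≃* FreeGroup (Fin 2)) ∧
      H ⊓ K = ⊥ ∧ H ⊔ K = ⊤ := by
  intro a b c H K
  refine ⟨⟨?_⟩, ⟨?_⟩, ?_, ?_⟩
  · exact (MulEquiv.subgroupCongr Stmt7Aux.H_eq).trans
      (MonoidHom.ofInjective Stmt7Aux.liftfH_inj).symm
  · exact (MulEquiv.subgroupCongr Stmt7Aux.K_eq).trans
      (MonoidHom.ofInjective Stmt7Aux.liftfK_inj).symm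
  · exact Stmt7Aux.inf_eq_bot
  · exact Stmt7Aux.sup_eq_top
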